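/- arXiv:1010.5466 — 2 statements merged into one kernel-verified Lean document; each statement's English description precedes it below -/
import Mathlib

section
/- Let p be an odd prime and let n, d be integers satisfying 2d + 2 ≤ n ≤ 3d and such that no integer i with n − 2d ≤ i < d divides d. Let H = H_1(𝔽_{p^d}) and identify Z(H) with 𝔽_{p^d} via (0,0,s) ↦ s. Let M and N be 𝔽_p-subspaces of 𝔽_{p^d} of 𝔽_p-codimension n − 2d (so, as subgroups of Z(H), both have index p^n in H). Then the quotient groups H/M and H/N are isomorphic if and only if there exist σ ∈ Gal(𝔽_{p^d}/𝔽_p) and c ∈ 𝔽_{p^d}^× with σ(M)·c = N. -/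
set_option linter.unusedSectionVars false

/-- The generalized Heisenberg group `H_m(K)`: underlying set `K^m × K^m × K` with
multiplication `(u,v,s)·(u',v',s') = (u+u', v+v', s+s'+u·v')`. -/
structure Heisenberg (K : Type*) (m : ℕ) where
  x : Fin m → K
  y : Fin m → K
  z : K

namespace Heisenberg

variable {K : Type*} [Field K] {m : ℕ}

@[ext] lemma ext' {a b : Heisenberg K m} (hx : a.x = b.x) (hy : a.y = b.y) (hz : a.z = b.z) :
    a = b := by cases a; cases b; simp_all

instance : Mul (Heisenberg K m) :=
  ⟨fun a b => ⟨a.x + b.x, a.y + b.y, a.z + b.z + dotProduct a.x b.y⟩⟩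

instance : One (Heisenberg K m) := ⟨⟨0, 0, 0⟩⟩

instance : Inv (Heisenberg K m) :=
  ⟨fun a => ⟨-a.x, -a.y, -a.z + dotProduct a.x a.y⟩⟩

@[simp] lemma mul_x (a b : Heisenberg K m) : (a * b).x = a.x + b.x := rfl
@[simp] lemma mul_y (a b : Heisenberg K m) : (a * b).y = a.y + b.y := rfl
@[simp] lemma mul_z (a b : Heisenberg K m) :
    (a * b).z = a.z + b.z + dotProduct a.x b.y := rfl
@[simp] lemma one_x : (1 : Heisenberg K m).x = 0 := rfl
@[simp] lemma one_y : (1 : Heisenberg K m).y = 0 := rfl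
@[simp] lemma one_z : (1 : Heisenberg K m).z = 0 := rfl
@[simp] lemma inv_x (a : Heisenberg K m) : a⁻¹.x = -a.x := rfl
@[simp] lemma inv_y (a : Heisenberg K m) : a⁻¹.y = -a.y := rfl
@[simp] lemma inv_z (a : Heisenberg K m) : a⁻¹.z = -a.z + dotProduct a.x a.y := rfl

instance instGroup : Group (Heisenberg K m) where
  mul_assoc a b c := by
    ext <;> simp [add_dotProduct, dotProduct_add] <;> ring
  one_mul a := by ext <;> simp
  mul_one a := by ext <;> simp
  inv_mul_cancel a := by
    ext <;> simp [neg_dotProduct]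

end Heisenberg

namespace Heisenberg

/-- The embedding of the additive group of `K` onto the center `{(0,0,s)}` of `H_m(K)`. -/
def centerHom (K : Type*) [Field K] (m : ℕ) : Multiplicative K →* Heisenberg K m where
  toFun s := ⟨0, 0, s.toAdd⟩
  map_one' := rfl
  map_mul' s t := by ext <;> simp

/-- The subgroup `{(0,0,s) : s ∈ M}` of `H_m(K)` attached to an additive subgroup `M ≤ K`. -/
def centralSubgroup (K : Type*) [Field K] (m : ℕ) (M : AddSubgroup K) :
    Subgroup (Heisenberg K m) :=
  (AddSubgroup.toSubgroup M).map (centerHom K m)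

end Heisenberg



namespace Stmt18

open Module
open scoped commutatorElement

variable {K : Type*} [Field K] {m : ℕ}

lemma dot1 (x y : Fin 1 → K) : dotProduct x y = x 0 * y 0 := by
  simp [dotProduct]

lemma central_mul (s t : K) :
    (⟨0, 0, s⟩ * ⟨0, 0, t⟩ : Heisenberg K m) = ⟨0, 0, s + t⟩ := by
  ext <;> simp

lemma central_comm (s : K) (b : Heisenberg K m) :
    (⟨0, 0, s⟩ : Heisenberg K m) * b = b * ⟨0, 0, s⟩ := by
  ext <;> simp [add_comm]

lemma commutator_eq (a b : Heisenberg K m) :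
    ⁅a, b⁆ = (⟨0, 0, dotProduct a.x b.y - dotProduct b.x a.y⟩ : Heisenberg K m) := by
  show a * b * a⁻¹ * b⁻¹ = _
  ext <;>
    simp [add_dotProduct, dotProduct_add, neg_dotProduct,
      dotProduct_neg] <;> ring

lemma conj_comm_eq (h b : Heisenberg K m) :
    (h * b)⁻¹ * (b * h) =
      (⟨0, 0, dotProduct b.x h.y - dotProduct h.x b.y⟩ : Heisenberg K m) := by
  ext <;>
    simp [add_dotProduct, dotProduct_add, neg_dotProduct,
      dotProduct_neg] <;> ring

lemma mem_centralSubgroup_iff (M : AddSubgroup K) (a : Heisenberg K m) :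
    a ∈ Heisenberg.centralSubgroup K m M ↔ a.x = 0 ∧ a.y = 0 ∧ a.z ∈ M := by
  constructor
  · rintro ⟨t, ht, rfl⟩
    exact ⟨rfl, rfl, ht⟩
  · rintro ⟨hx, hy, hz⟩
    exact ⟨Multiplicative.ofAdd a.z, hz, by ext <;> simp [Heisenberg.centerHom, hx, hy]⟩

end Stmt18

section LemA

open Module

variable {p n d : ℕ} [Fact p.Prime]

lemma lemA
    (h1 : 2 * d + 2 ≤ n) (h2 : n ≤ 3 * d)
    (h3 : ∀ i : ℕ, n - 2 * d ≤ i → i < d → ¬ i ∣ d)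
    (M : Submodule (ZMod p) (GaloisField p d))
    (hM : Module.finrank (ZMod p) M = d - (n - 2 * d))
    (φ φ' : GaloisField p d → GaloisField p d)
    (hφ' : ∀ a b, φ' (a + b) = φ' a + φ' b)
    (h : ∀ x y, φ x * y - x * φ' y ∈ M) :
    ∃ c, (∀ x, φ x = c * x) ∧ (∀ y, φ' y = c * y) := by
  have hd0 : d ≠ 0 := by omega
  have hK : finrank (ZMod p) (GaloisField p d) = d := GaloisField.finrank p hd0
  have he2 : 2 ≤ n - 2 * d := by omega
  have hed : n - 2 * d ≤ d := by omega
  -- M ≠ ⊤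
  have hMtop : M ≠ ⊤ := by
    intro hh
    rw [hh, finrank_top, hK] at hM
    omega
  have habs : ∀ z : GaloisField p d, (∀ w, z * w ∈ M) → z = 0 := by
    intro z hz
    by_contra h0
    apply hMtop
    rw [Submodule.eq_top_iff']
    intro w
    have := hz (z⁻¹ * w)
    rwa [mul_inv_cancel_left₀ h0] at this
  -- φ' 0 = 0
  have hφ'0 : φ' 0 = 0 := by
    have h00 := hφ' 0 0
    rw [add_zero] at h00
    have : φ' 0 + φ' 0 = φ' 0 + 0 := by rw [add_zero]; exact h00.symm
    exact add_left_cancel this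
  -- the dual annihilator of M inside K w.r.t. the trace form
  set Tr := Algebra.trace (ZMod p) (GaloisField p d) with hTr
  let lmap : GaloisField p d →ₗ[ZMod p] Module.Dual (ZMod p) M :=
    { toFun := fun α => ((Algebra.traceForm (ZMod p) (GaloisField p d)) α).domRestrict M
      map_add' := by intro a b; ext m; simp
      map_smul' := by intro a b; ext m; simp }
  set Mp := LinearMap.ker lmap with hMpdef
  have hMp_mem : ∀ α, α ∈ Mp ↔ ∀ x ∈ M, Tr (α * x) = 0 := by
    intro α
    constructor
    · intro hα x hx
      have : lmap α = 0 := hα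
      have := congrArg (fun f => f ⟨x, hx⟩) this
      simpa [lmap, Algebra.traceForm_apply] using this
    · intro hα
      show lmap α = 0
      ext ⟨x, hx⟩
      simpa [lmap, Algebra.traceForm_apply] using hα x hx
  have hMpdim : n - 2 * d ≤ finrank (ZMod p) Mp := by
    have e1 := LinearMap.finrank_range_add_finrank_ker lmap
    rw [← hMpdef] at e1
    have e2 : finrank (ZMod p) (LinearMap.range lmap) ≤
        finrank (ZMod p) (Module.Dual (ZMod p) M) := Submodule.finrank_le _
    have e3 : finrank (ZMod p) (Module.Dual (ZMod p) M) = finrank (ZMod p) M :=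
      Subspace.dual_finrank_eq
    rw [hK] at e1
    omega
  -- a nonzero element of Mp
  have hMpbot : Mp ≠ ⊥ := by
    intro hh
    rw [hh, finrank_bot] at hMpdim
    omega
  obtain ⟨γ, hγmem, hγ0⟩ := Submodule.exists_mem_ne_zero_of_ne_bot hMpbot
  -- basic trace relation
  have R : ∀ β ∈ Mp, ∀ x y, Tr (β * (φ x * y)) = Tr (β * (x * φ' y)) := by
    intro β hβ x y
    have hm := (hMp_mem β).1 hβ _ (h x y)
    rw [mul_sub, map_sub, sub_eq_zero] at hm
    simpa [mul_assoc] using hm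
  -- key relation
  have KR : ∀ α ∈ Mp, ∀ y, φ' (α * γ⁻¹ * y) = α * γ⁻¹ * φ' y := by
    intro α hα y
    have hz : ∀ x, (Algebra.traceForm (ZMod p) (GaloisField p d))
        (α * φ' y - γ * φ' (α * γ⁻¹ * y)) x = 0 := by
      intro x
      have e1 := R α hα x y
      have e2 := R γ hγmem x (α * γ⁻¹ * y)
      have hcan : γ * γ⁻¹ = 1 := mul_inv_cancel₀ hγ0
      have key1 : γ * (φ x * (α * γ⁻¹ * y)) = α * (φ x * y) := by
        linear_combination (φ x * α * y) * hcan
      rw [key1] at e2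
      rw [Algebra.traceForm_apply]
      have expand : (α * φ' y - γ * φ' (α * γ⁻¹ * y)) * x
          = α * (x * φ' y) - γ * (x * φ' (α * γ⁻¹ * y)) := by ring
      rw [expand, map_sub, ← e1, ← e2, sub_self]
    have hnd := traceForm_nondegenerate (ZMod p) (GaloisField p d)
    have hz0 := hnd.1 _ hz
    have hge : γ * φ' (α * γ⁻¹ * y) = α * φ' y := by linear_combination -hz0
    have hstep : φ' (α * γ⁻¹ * y) = γ⁻¹ * (γ * φ' (α * γ⁻¹ * y)) := by
      rw [inv_mul_cancel_left₀ hγ0]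
    rw [hstep, hge]
    ring
  -- the subfield of multipliers
  have hnatmul : ∀ (j : ℕ) (y : GaloisField p d), φ' ((j : GaloisField p d) * y)
      = (j : GaloisField p d) * φ' y := by
    intro j
    induction j with
    | zero => intro y; simpa using hφ'0
    | succ k ih =>
      intro y
      push_cast
      rw [add_mul, one_mul, hφ' _ y, ih y, add_mul, one_mul]
  let S : IntermediateField (ZMod p) (GaloisField p d) :=
    { carrier := {r | ∀ y, φ' (r * y) = r * φ' y}
      mul_mem' := by
        intro a b ha hb y
        rw [mul_assoc, ha (b * y), hb y, mul_assoc]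
      one_mem' := by intro y; rw [one_mul, one_mul]
      add_mem' := by
        intro a b ha hb y
        rw [add_mul, hφ' (a * y) (b * y), ha y, hb y, add_mul]
      zero_mem' := by intro y; simpa using hφ'0
      algebraMap_mem' := by
        intro k
        obtain ⟨j, rfl⟩ := ZMod.natCast_zmod_surjective k
        intro y
        rw [map_natCast]
        exact hnatmul j y
      inv_mem' := by
        intro r hr
        rcases eq_or_ne r 0 with rfl | hr0
        · intro y; simpa using hφ'0
        · intro y
          have := hr (r⁻¹ * y)
          rw [mul_inv_cancel_left₀ hr0] at this
          rw [this, inv_mul_cancel_left₀ hr0] }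
  -- S contains γ⁻¹ • Mp
  let eγ : GaloisField p d ≃ₗ[ZMod p] GaloisField p d :=
    { toFun := fun x => γ⁻¹ * x
      map_add' := fun a b => mul_add _ a b
      map_smul' := by intro r a; simp [mul_smul_comm]
      invFun := fun x => γ * x
      left_inv := fun x => by field_simp
      right_inv := fun x => by field_simp }
  have hmaple : (Mp.map (eγ : GaloisField p d →ₗ[ZMod p] GaloisField p d)) ≤
      Subalgebra.toSubmodule S.toSubalgebra := by
    rintro x ⟨α, hα, rfl⟩
    rw [Subalgebra.mem_toSubmodule, IntermediateField.mem_toSubalgebra]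
    have hmem : ∀ y, φ' ((γ⁻¹ * α) * y) = (γ⁻¹ * α) * φ' y := by
      intro y
      rw [mul_comm γ⁻¹ α]
      exact KR α hα y
    show (γ⁻¹ * α) ∈ S
    exact hmem
  have hfr1 : finrank (ZMod p) (Mp.map (eγ : GaloisField p d →ₗ[ZMod p] GaloisField p d))
      = finrank (ZMod p) Mp := LinearEquiv.finrank_map_eq eγ Mp
  have hfr2 : finrank (ZMod p) (Subalgebra.toSubmodule S.toSubalgebra) = finrank (ZMod p) S :=
    Subalgebra.finrank_toSubmodule S.toSubalgebra
  have hSge : n - 2 * d ≤ finrank (ZMod p) S := by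
    have hle := Submodule.finrank_mono hmaple
    omega
  have htower : finrank (ZMod p) S * finrank S (GaloisField p d) = d := by
    rw [finrank_mul_finrank, hK]
  have hSd : finrank (ZMod p) S ∣ d := ⟨finrank S (GaloisField p d), htower.symm⟩
  have hSle : finrank (ZMod p) S ≤ d := by
    have := Submodule.finrank_le (Subalgebra.toSubmodule S.toSubalgebra)
    rw [hK] at this
    omega
  have hStop : finrank (ZMod p) S = d := by
    by_contra hne
    exact h3 _ hSge (lt_of_le_of_ne hSle hne) hSd
  have hSall : ∀ r : GaloisField p d, ∀ y, φ' (r * y) = r * φ' y := by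
    intro r
    have htop : Subalgebra.toSubmodule S.toSubalgebra = ⊤ :=
      Submodule.eq_top_of_finrank_eq (by rw [hK, hfr2]; exact hStop)
    have hrS : r ∈ S.toSubalgebra := by
      rw [← Subalgebra.mem_toSubmodule, htop]
      trivial
    exact (IntermediateField.mem_toSubalgebra S r).mp hrS
  have hφ'c : ∀ y, φ' y = φ' 1 * y := by
    intro y
    have := hSall y 1
    rw [mul_one] at this
    rw [this, mul_comm]
  have hφc : ∀ x, φ x = φ' 1 * x := by
    intro x
    have hz : ∀ w, (φ x - φ' 1 * x) * w ∈ M := by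
      intro w
      have heq : (φ x - φ' 1 * x) * w = φ x * w - x * φ' w := by rw [hφ'c w]; ring
      rw [heq]
      exact h x w
    have h0 := habs _ hz
    linear_combination h0
  exact ⟨φ' 1, hφc, hφ'c⟩

end LemA

section Backward

variable {K : Type*} [Field K] {m : ℕ}

lemma dot_map (σ : K ≃+* K) (c : K) (x y : Fin m → K) :
    dotProduct (fun i => σ (x i)) (fun i => σ (y i) * c)
      = σ (dotProduct x y) * c := by
  simp [dotProduct, map_sum, Finset.sum_mul, mul_assoc]

/-- The semilinear automorphism of the Heisenberg group induced by `(σ, c)`. -/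
def heisAut (σ : K ≃+* K) (c : Kˣ) : Heisenberg K m ≃* Heisenberg K m where
  toFun a := ⟨fun i => σ (a.x i), fun i => σ (a.y i) * c, σ a.z * c⟩
  invFun b := ⟨fun i => σ.symm (b.x i), fun i => σ.symm (b.y i * (c : K)⁻¹), σ.symm (b.z * (c : K)⁻¹)⟩
  left_inv a := by
    ext <;> simp [mul_assoc, Units.mul_inv_cancel_right]
  right_inv b := by
    ext <;> simp [mul_assoc, Units.inv_mul_cancel_right]
  map_mul' a b := by
    ext
    · simp
    · simp [add_mul]
    · simp only [Heisenberg.mul_z, map_add, add_mul, dot_map]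

lemma heisAut_central (σ : K ≃+* K) (c : Kˣ) (s : K) :
    (heisAut (m := m) σ c) ⟨0, 0, s⟩ = ⟨0, 0, σ s * c⟩ := by
  ext <;> simp [heisAut]

lemma backward (M N : AddSubgroup K)
    [(Heisenberg.centralSubgroup K m M).Normal] [(Heisenberg.centralSubgroup K m N).Normal]
    (σ : K ≃+* K) (c : Kˣ)
    (h : (fun x => σ x * (c : K)) '' (M : Set K) = (N : Set K)) :
    Nonempty ((Heisenberg K m ⧸ Heisenberg.centralSubgroup K m M) ≃*
      (Heisenberg K m ⧸ Heisenberg.centralSubgroup K m N)) := by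
  refine ⟨QuotientGroup.congr _ _ (heisAut σ c) ?_⟩
  ext a
  simp only [Subgroup.mem_map, Stmt18.mem_centralSubgroup_iff, MonoidHom.coe_coe]
  constructor
  · rintro ⟨b, ⟨hbx, hby, hbz⟩, rfl⟩
    have hb : b = ⟨0, 0, b.z⟩ := by ext <;> simp [hbx, hby]
    rw [hb, heisAut_central]
    refine ⟨rfl, rfl, ?_⟩
    have : σ b.z * (c : K) ∈ (N : Set K) := by
      rw [← h]
      exact ⟨b.z, hbz, rfl⟩
    exact this
  · rintro ⟨hax, hay, haz⟩
    have haz' : a.z ∈ (N : Set K) := haz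
    rw [← h] at haz'
    obtain ⟨s, hs, hsa⟩ := haz'
    refine ⟨⟨0, 0, s⟩, ⟨rfl, rfl, hs⟩, ?_⟩
    rw [heisAut_central]
    ext <;> simp [hax, hay, hsa]

end Backward

section Forward

open Module
open scoped commutatorElement

variable {p n d : ℕ} [Fact p.Prime]

lemma forward (hp : Odd p)
    (h1 : 2 * d + 2 ≤ n) (h2 : n ≤ 3 * d)
    (h3 : ∀ i : ℕ, n - 2 * d ≤ i → i < d → ¬ i ∣ d)
    (M N : Submodule (ZMod p) (GaloisField p d))
    (hM : Module.finrank (ZMod p) M = d - (n - 2 * d))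
    (hN : Module.finrank (ZMod p) N = d - (n - 2 * d))
    [hMnorm : (Heisenberg.centralSubgroup (GaloisField p d) 1 M.toAddSubgroup).Normal]
    [hNnorm : (Heisenberg.centralSubgroup (GaloisField p d) 1 N.toAddSubgroup).Normal]
    (Φ : (Heisenberg (GaloisField p d) 1 ⧸ Heisenberg.centralSubgroup (GaloisField p d) 1 M.toAddSubgroup) ≃*
         (Heisenberg (GaloisField p d) 1 ⧸ Heisenberg.centralSubgroup (GaloisField p d) 1 N.toAddSubgroup)) :
    ∃ (σ : GaloisField p d ≃+* GaloisField p d) (c : (GaloisField p d)ˣ),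
      (fun x => σ x * (c : GaloisField p d)) '' (M : Set (GaloisField p d)) =
        (N : Set (GaloisField p d)) := by
  classical
  have hd0 : d ≠ 0 := by omega
  have hfinK : finrank (ZMod p) (GaloisField p d) = d := GaloisField.finrank p hd0
  have he1 : 2 ≤ n - 2 * d := by omega
  have hed : n - 2 * d ≤ d := by omega
  have hNtop : N ≠ ⊤ := by intro hh; rw [hh, finrank_top, hfinK] at hN; omega
  have hMtop : M ≠ ⊤ := by intro hh; rw [hh, finrank_top, hfinK] at hM; omega
  have habsN : ∀ z : GaloisField p d, (∀ w, z * w ∈ N) → z = 0 := by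
    intro z hz
    by_contra h0
    apply hNtop
    rw [Submodule.eq_top_iff']
    intro w
    have := hz (z⁻¹ * w)
    rwa [mul_inv_cancel_left₀ h0] at this
  have habsM : ∀ z : GaloisField p d, (∀ w, z * w ∈ M) → z = 0 := by
    intro z hz
    by_contra h0
    apply hMtop
    rw [Submodule.eq_top_iff']
    intro w
    have := hz (z⁻¹ * w)
    rwa [mul_inv_cancel_left₀ h0] at this
  set Mbar := Heisenberg.centralSubgroup (GaloisField p d) 1 M.toAddSubgroup with hMbar
  set Nbar := Heisenberg.centralSubgroup (GaloisField p d) 1 N.toAddSubgroup with hNbar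
  set F := Φ.toMonoidHom.comp (QuotientGroup.mk' Mbar) with hF
  have hFapp : ∀ a, F a = Φ (QuotientGroup.mk' Mbar a) := fun a => rfl
  have hFsurj : Function.Surjective F := by
    intro y
    obtain ⟨x, hx⟩ := QuotientGroup.mk'_surjective Mbar (Φ.symm y)
    exact ⟨x, by rw [hFapp, hx, MulEquiv.apply_symm_apply]⟩
  have hmemMbar : ∀ s : GaloisField p d, ((⟨0,0,s⟩ : Heisenberg (GaloisField p d) 1) ∈ Mbar) ↔ s ∈ M := by
    intro s
    rw [hMbar, Stmt18.mem_centralSubgroup_iff]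
    simp
  have hmemNbar : ∀ s : GaloisField p d, ((⟨0,0,s⟩ : Heisenberg (GaloisField p d) 1) ∈ Nbar) ↔ s ∈ N := by
    intro s
    rw [hNbar, Stmt18.mem_centralSubgroup_iff]
    simp
  have hKM : ∀ s, F ⟨0,0,s⟩ = 1 ↔ s ∈ M := by
    intro s
    rw [← hmemMbar s, ← QuotientGroup.eq_one_iff]
    rw [hFapp]
    constructor
    · intro hs
      apply Φ.injective
      rw [map_one]
      exact hs
    · intro hs
      rw [QuotientGroup.mk'_apply, hs, map_one]
  have hKN : ∀ t, (QuotientGroup.mk' Nbar ⟨0,0,t⟩ = 1) ↔ t ∈ N := by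
    intro t
    rw [← hmemNbar t, ← QuotientGroup.eq_one_iff]
    rw [QuotientGroup.mk'_apply]
  have hFz : ∀ s t, F ⟨0,0,s⟩ * F ⟨0,0,t⟩ = F ⟨0,0,s+t⟩ := by
    intro s t
    rw [← map_mul, Stmt18.central_mul]
  have hF0 : F (⟨0,0,0⟩ : Heisenberg (GaloisField p d) 1) = 1 := by
    have h00 : (⟨0,0,(0 : GaloisField p d)⟩ : Heisenberg (GaloisField p d) 1) = 1 := by
      ext <;> simp
    rw [h00, map_one]
  have hFdiff : ∀ s t, F ⟨0,0,s⟩ = F ⟨0,0,t⟩ → s - t ∈ M := by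
    intro s t hst
    have e1 : F ⟨0,0,s-t⟩ * F ⟨0,0,t⟩ = F ⟨0,0,t⟩ := by
      rw [hFz, sub_add_cancel, hst]
    have e2 : F ⟨0,0,s-t⟩ = 1 := by
      have := mul_right_cancel (b := F ⟨0,0,t⟩) (a := F ⟨0,0,s-t⟩) (c := 1)
      apply this
      rw [one_mul]
      exact e1
    exact (hKM _).1 e2
  -- the projection to K × K
  set q : Heisenberg (GaloisField p d) 1 →* Multiplicative (GaloisField p d × GaloisField p d) :=
    { toFun := fun a => Multiplicative.ofAdd (a.x 0, a.y 0)
      map_one' := rfl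
      map_mul' := fun a b => rfl } with hq
  have hqN : ∀ x ∈ Nbar, q x = 1 := by
    intro x hx
    rw [hNbar, Stmt18.mem_centralSubgroup_iff] at hx
    obtain ⟨hx1, hx2, _⟩ := hx
    show Multiplicative.ofAdd (x.x 0, x.y 0) = 1
    rw [hx1, hx2]
    rfl
  set qb := QuotientGroup.lift Nbar q hqN with hqb
  have hqbmk : ∀ hh : Heisenberg (GaloisField p d) 1, qb (QuotientGroup.mk' Nbar hh) = q hh :=
    fun _ => rfl
  set ε : GaloisField p d × GaloisField p d → Heisenberg (GaloisField p d) 1 :=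
    fun w => ⟨fun _ => w.1, fun _ => w.2, 0⟩ with hε
  set g : GaloisField p d × GaloisField p d → GaloisField p d × GaloisField p d :=
    fun w => (qb (F (ε w))).toAdd with hg
  -- central elements of the quotient are killed by qb
  have hCQ : ∀ ξ, (∀ y, ξ * y = y * ξ) → qb ξ = 1 := by
    intro ξ hcomm
    obtain ⟨h, hh⟩ := QuotientGroup.mk'_surjective Nbar ξ
    have hxy : ∀ b : Heisenberg (GaloisField p d) 1,
        dotProduct b.x h.y - dotProduct h.x b.y ∈ N := by
      intro b
      have hc := hcomm (QuotientGroup.mk' Nbar b)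
      rw [← hh, ← map_mul, ← map_mul] at hc
      have hmem : (h * b)⁻¹ * (b * h) ∈ Nbar := by
        rw [← QuotientGroup.eq]
        exact hc
      rw [Stmt18.conj_comm_eq] at hmem
      exact (hmemNbar _).1 hmem
    have hx0 : h.x 0 = 0 := by
      apply habsN
      intro w
      have := hxy (ε (0, w))
      simp only [hε, Stmt18.dot1] at this
      simpa using (neg_mem this : _)
    have hy0 : h.y 0 = 0 := by
      apply habsN
      intro w
      have := hxy (ε (w, 0))
      simp only [hε, Stmt18.dot1] at this
      rw [mul_comm]
      simpa using this
    rw [← hh, hqbmk]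
    show Multiplicative.ofAdd (h.x 0, h.y 0) = 1
    rw [hx0, hy0]
    rfl
  have hK1 : ∀ s : GaloisField p d, qb (F ⟨0,0,s⟩) = 1 := by
    intro s
    apply hCQ
    intro y
    obtain ⟨b, rfl⟩ := hFsurj y
    rw [← map_mul, ← map_mul, Stmt18.central_comm]
  -- additivity of g
  have hgadd : ∀ w w', g (w + w') = g w + g w' := by
    intro w w'
    have hsplit : ε w * ε w' = ε (w + w') * ⟨0,0, w.1 * w'.2⟩ := by
      ext <;> simp [hε, Stmt18.dot1]
    have := congrArg (fun a => qb (F a)) hsplit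
    simp only [map_mul] at this
    rw [hK1] at this
    rw [mul_one] at this
    rw [hg]
    show (qb (F (ε (w + w')))).toAdd = (qb (F (ε w))).toAdd + (qb (F (ε w'))).toAdd
    rw [← this]
    rfl
  have hg0 : g 0 = 0 := by
    have hε0 : ε 0 = 1 := by ext <;> simp [hε]
    rw [hg]
    show (qb (F (ε 0))).toAdd = 0
    rw [hε0, map_one, map_one]
    rfl
  -- master relation
  have MR : ∀ w w' : GaloisField p d × GaloisField p d,
      F ⟨0,0, w.1 * w'.2 - w'.1 * w.2⟩ =
        QuotientGroup.mk' Nbar ⟨0,0, (g w).1 * (g w').2 - (g w').1 * (g w).2⟩ := by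
    intro w w'
    obtain ⟨h, hh⟩ := QuotientGroup.mk'_surjective Nbar (F (ε w))
    obtain ⟨h', hh'⟩ := QuotientGroup.mk'_surjective Nbar (F (ε w'))
    have hgw : g w = (h.x 0, h.y 0) := by
      rw [hg]
      show (qb (F (ε w))).toAdd = _
      rw [← hh, hqbmk]
      rfl
    have hgw' : g w' = (h'.x 0, h'.y 0) := by
      rw [hg]
      show (qb (F (ε w'))).toAdd = _
      rw [← hh', hqbmk]
      rfl
    have hcom : (⟨0,0, w.1 * w'.2 - w'.1 * w.2⟩ : Heisenberg (GaloisField p d) 1) = ⁅ε w, ε w'⁆ := by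
      rw [Stmt18.commutator_eq]
      ext <;> simp [hε, Stmt18.dot1]
    rw [hcom, map_commutatorElement, ← hh, ← hh', ← map_commutatorElement,
      Stmt18.commutator_eq]
    congr 1
    ext <;> simp [Stmt18.dot1, hgw, hgw']
  -- injectivity of g
  have hg_zero : ∀ w, g w = 0 → w = 0 := by
    intro w hw
    have hBmem : ∀ w' : GaloisField p d × GaloisField p d, w.1 * w'.2 - w'.1 * w.2 ∈ M := by
      intro w'
      apply (hKM _).1
      rw [MR w w', hw]
      simp only [Prod.fst_zero, Prod.snd_zero, zero_mul, mul_zero, sub_zero]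
      exact (hKN 0).2 (zero_mem N)
    have hw1 : w.1 = 0 := by
      apply habsM
      intro v
      have := hBmem (0, v)
      simpa using this
    have hw2 : w.2 = 0 := by
      apply habsM
      intro v
      have := hBmem (v, 0)
      have h' : -(v * w.2) ∈ M := by simpa [hw1] using this
      rw [mul_comm]
      simpa using (neg_mem h' : _)
    ext
    · exact hw1
    · exact hw2
  have hginj : Function.Injective g := by
    intro w w' hww
    have hadd := hgadd (w - w') w'
    rw [sub_add_cancel, hww] at hadd
    have h0 : g (w - w') = 0 := by
      have h1 : g (w - w') + g w' = 0 + g w' := by rw [zero_add]; exact hadd.symm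
      exact add_right_cancel h1
    exact sub_eq_zero.mp (hg_zero _ h0)
  have hgbij : Function.Bijective g := Finite.injective_iff_bijective.mp hginj
  set E := Equiv.ofBijective g hgbij with hE
  -- for every r there is a scalar χ r with g (χ r • x) = r • g x
  have hfr : ∀ r : GaloisField p d, ∃ c : GaloisField p d,
      ∀ x : GaloisField p d × GaloisField p d, g (c • x) = r • g x := by
    intro r
    set f : GaloisField p d × GaloisField p d → GaloisField p d × GaloisField p d :=
      fun w => E.symm (r • g w) with hf
    have hgf : ∀ w, g (f w) = r • g w := by
      intro w
      rw [hf]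
      exact E.apply_symm_apply (r • g w)
    have hfadd : ∀ w w', f (w + w') = f w + f w' := by
      intro w w'
      apply hginj
      rw [hgf, hgadd, hgadd, hgf, hgf, smul_add]
    -- the mod-M adjoint property
    have hfM : ∀ x y : GaloisField p d × GaloisField p d,
        ((f x).1 * y.2 - y.1 * (f x).2) - (x.1 * (f y).2 - (f y).1 * x.2) ∈ M := by
      intro x y
      apply hFdiff
      have m1 := MR (f x) y
      have m2 := MR x (f y)
      rw [m1, m2, hgf, hgf]
      have hz : (r • g x).1 * (g y).2 - (g y).1 * (r • g x).2
          = (g x).1 * (r • g y).2 - (r • g y).1 * (g x).2 := by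
        simp only [Prod.smul_fst, Prod.smul_snd, smul_eq_mul]
        ring
      rw [hz]
    -- components
    set f11 : GaloisField p d → GaloisField p d := fun u => (f (u, 0)).1 with hf11
    set f21 : GaloisField p d → GaloisField p d := fun u => (f (u, 0)).2 with hf21
    set f12 : GaloisField p d → GaloisField p d := fun v => (f (0, v)).1 with hf12
    set f22 : GaloisField p d → GaloisField p d := fun v => (f (0, v)).2 with hf22
    have haddu : ∀ a b : GaloisField p d, f (a + b, 0) = f (a, 0) + f (b, 0) := by
      intro a b
      have := hfadd (a, 0) (b, 0)
      simpa using this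
    have haddv : ∀ a b : GaloisField p d, f (0, a + b) = f (0, a) + f (0, b) := by
      intro a b
      have := hfadd (0, a) (0, b)
      simpa using this
    have h2K : (2 : GaloisField p d) ≠ 0 := by
      have hp2 : p ≠ 2 := by
        rintro rfl
        exact (by decide : ¬ Odd 2) hp
      intro h2
      have h2' : ((2 : ℕ) : GaloisField p d) = 0 := by exact_mod_cast h2
      have := (CharP.cast_eq_zero_iff (GaloisField p d) p 2).1 h2'
      have hle := Nat.le_of_dvd (by norm_num) this
      have hge := (Fact.out : p.Prime).two_le
      omega
    have hhalf : ∀ z : GaloisField p d, z = -z → z = 0 := by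
      intro z hzz
      have : 2 * z = 0 := by linear_combination hzz
      rcases mul_eq_zero.mp this with h' | h'
      · exact absurd h' h2K
      · exact h'
    -- application 1 : f21 = 0
    have hf21add : ∀ a b, f21 (a + b) = f21 a + f21 b := by
      intro a b
      simp [hf21, haddu a b]
    have hap1 : ∀ x y : GaloisField p d,
        (fun u => -(f21 u)) x * y - x * f21 y ∈ M := by
      intro x y
      have hm := hfM (x, 0) (y, 0)
      have heq : (fun u => -(f21 u)) x * y - x * f21 y
          = ((f (x,0)).1 * ((y : GaloisField p d), (0 : GaloisField p d)).2
              - ((y : GaloisField p d), (0 : GaloisField p d)).1 * (f (x,0)).2)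
            - (((x : GaloisField p d), (0 : GaloisField p d)).1 * (f (y,0)).2
              - (f (y,0)).1 * ((x : GaloisField p d), (0 : GaloisField p d)).2) := by
        simp only [hf21]
        ring
      rw [heq]
      exact hm
    obtain ⟨c1, hc1a, hc1b⟩ := lemA h1 h2 h3 M hM _ f21 hf21add hap1
    have hc10 : c1 = 0 := by
      apply hhalf
      have e1 := hc1a 1
      have e2 := hc1b 1
      linear_combination -e1 - e2
    have hf21z : ∀ u, f21 u = 0 := by
      intro u
      rw [hc1b u, hc10, zero_mul]
    -- application 2 : f12 = 0
    have hf12add : ∀ a b, (fun v => -(f12 v)) (a + b) = (fun v => -(f12 v)) a + (fun v => -(f12 v)) b := by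
      intro a b
      simp [hf12, haddv a b]
      ring
    have hap2 : ∀ x y : GaloisField p d,
        f12 x * y - x * ((fun v => -(f12 v)) y) ∈ M := by
      intro x y
      have hm := hfM (0, x) (0, y)
      have heq : f12 x * y - x * ((fun v => -(f12 v)) y)
          = ((f (0,x)).1 * ((0 : GaloisField p d), (y : GaloisField p d)).2
              - ((0 : GaloisField p d), (y : GaloisField p d)).1 * (f (0,x)).2)
            - (((0 : GaloisField p d), (x : GaloisField p d)).1 * (f (0,y)).2
              - (f (0,y)).1 * ((0 : GaloisField p d), (x : GaloisField p d)).2) := by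
        simp only [hf12]
        ring
      rw [heq]
      exact hm
    obtain ⟨c2, hc2a, hc2b⟩ := lemA h1 h2 h3 M hM f12 _ hf12add hap2
    have hc20 : c2 = 0 := by
      apply hhalf
      have e1 := hc2a 1
      have e2 := hc2b 1
      linear_combination -e1 - e2
    have hf12z : ∀ v, f12 v = 0 := by
      intro v
      rw [hc2a v, hc20, zero_mul]
    -- application 3 : f11 = f22 = c • id
    have hf22add : ∀ a b, f22 (a + b) = f22 a + f22 b := by
      intro a b
      simp [hf22, haddv a b]
    have hap3 : ∀ x y : GaloisField p d, f11 x * y - x * f22 y ∈ M := by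
      intro x y
      have hm := hfM (x, 0) (0, y)
      have heq : f11 x * y - x * f22 y
          = ((f (x,0)).1 * ((0 : GaloisField p d), (y : GaloisField p d)).2
              - ((0 : GaloisField p d), (y : GaloisField p d)).1 * (f (x,0)).2)
            - (((x : GaloisField p d), (0 : GaloisField p d)).1 * (f (0,y)).2
              - (f (0,y)).1 * ((x : GaloisField p d), (0 : GaloisField p d)).2) := by
        simp only [hf11, hf22]
        ring
      rw [heq]
      exact hm
    obtain ⟨c, hca, hcb⟩ := lemA h1 h2 h3 M hM f11 f22 hf22add hap3
    -- f is scalar multiplication by c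
    have hfw : ∀ w : GaloisField p d × GaloisField p d, f w = c • w := by
      intro w
      have hsplit : f w = f (w.1, 0) + f (0, w.2) := by
        rw [← hfadd]
        congr 1
        ext <;> simp
      rw [hsplit]
      have e1 : f (w.1, 0) = (c * w.1, 0) := by
        refine Prod.ext ?_ ?_
        · exact hca w.1
        · exact hf21z w.1
      have e2 : f (0, w.2) = (0, c * w.2) := by
        refine Prod.ext ?_ ?_
        · exact hf12z w.2
        · exact hcb w.2
      rw [e1, e2]
      refine Prod.ext ?_ ?_ <;> simp [smul_eq_mul]
    exact ⟨c, fun x => by rw [← hfw x]; exact hgf x⟩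
  -- the multiplier map χ
  set χ : GaloisField p d → GaloisField p d := fun r => Classical.choose (hfr r) with hχ
  have hχspec : ∀ r x, g (χ r • x) = r • g x := fun r => Classical.choose_spec (hfr r)
  have hχadd : ∀ r s, χ (r + s) = χ r + χ s := by
    intro r s
    have key : g ((χ r + χ s) • ((1:GaloisField p d), (0:GaloisField p d)))
        = g (χ (r + s) • ((1:GaloisField p d), (0:GaloisField p d))) := by
      rw [add_smul, hgadd, hχspec r, hχspec s, hχspec (r+s), ← add_smul]
    have := hginj key
    have h1' := congrArg Prod.fst this
    exact (by simpa using h1' : χ r + χ s = χ (r + s)).symm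
  have hχmul : ∀ r s, χ (r * s) = χ r * χ s := by
    intro r s
    have key : g ((χ r * χ s) • ((1:GaloisField p d), (0:GaloisField p d)))
        = g (χ (r * s) • ((1:GaloisField p d), (0:GaloisField p d))) := by
      rw [mul_smul, hχspec r, hχspec s, hχspec (r*s), ← mul_smul]
    have := hginj key
    have h1' := congrArg Prod.fst this
    exact (by simpa using h1' : χ r * χ s = χ (r * s)).symm
  have hχone : χ 1 = 1 := by
    have key : g (χ 1 • ((1:GaloisField p d), (0:GaloisField p d)))
        = g ((1:GaloisField p d) • ((1:GaloisField p d), (0:GaloisField p d))) := by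
      rw [hχspec, one_smul, one_smul]
    have := hginj key
    have h1' := congrArg Prod.fst this
    simpa using h1'
  have hχzero : χ 0 = 0 := by
    have := hχadd 0 0
    rw [add_zero] at this
    have h1' : χ 0 + χ 0 = χ 0 + 0 := by rw [add_zero]; exact this.symm
    exact add_left_cancel h1'
  set χhom : GaloisField p d →+* GaloisField p d :=
    { toFun := χ, map_one' := hχone, map_mul' := hχmul, map_zero' := hχzero,
      map_add' := hχadd } with hχhom
  have hχbij : Function.Bijective χhom :=
    Finite.injective_iff_bijective.mp χhom.injective
  set σe : GaloisField p d ≃+* GaloisField p d := RingEquiv.ofBijective χhom hχbij with hσe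
  set σ : GaloisField p d ≃+* GaloisField p d := σe.symm with hσ
  have hχσ : ∀ r, χ (σ r) = r := by
    intro r
    exact σe.apply_symm_apply r
  have hsemi : ∀ (r : GaloisField p d) (x : GaloisField p d × GaloisField p d),
      g (r • x) = σ r • g x := by
    intro r x
    conv_lhs => rw [← hχσ r]
    exact hχspec (σ r) x
  -- express g via a basis
  set A1 : GaloisField p d := (g (1, 0)).1 with hA1
  set A2 : GaloisField p d := (g (1, 0)).2 with hA2
  set B1 : GaloisField p d := (g (0, 1)).1 with hB1
  set B2 : GaloisField p d := (g (0, 1)).2 with hB2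
  have hgw : ∀ w : GaloisField p d × GaloisField p d,
      g w = (σ w.1 * A1 + σ w.2 * B1, σ w.1 * A2 + σ w.2 * B2) := by
    intro w
    have hw : w = w.1 • ((1:GaloisField p d), (0:GaloisField p d))
        + w.2 • ((0:GaloisField p d), (1:GaloisField p d)) := by
      refine Prod.ext ?_ ?_ <;> simp
    calc g w = g (w.1 • ((1:GaloisField p d), (0:GaloisField p d))
        + w.2 • ((0:GaloisField p d), (1:GaloisField p d))) := by rw [← hw]
    _ = σ w.1 • g (1, 0) + σ w.2 • g (0, 1) := by rw [hgadd, hsemi, hsemi]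
    _ = (σ w.1 * A1 + σ w.2 * B1, σ w.1 * A2 + σ w.2 * B2) := by
        refine Prod.ext ?_ ?_ <;> simp [hA1, hA2, hB1, hB2, smul_eq_mul]
  set c0 : GaloisField p d := A1 * B2 - B1 * A2 with hc0
  have hBform : ∀ w w' : GaloisField p d × GaloisField p d,
      (g w).1 * (g w').2 - (g w').1 * (g w).2 = c0 * σ (w.1 * w'.2 - w'.1 * w.2) := by
    intro w w'
    rw [hgw w, hgw w', hc0]
    simp only [map_sub, map_mul]
    ring
  have hMR2 : ∀ w : GaloisField p d,
      F ⟨0,0,w⟩ = QuotientGroup.mk' Nbar ⟨0,0, c0 * σ w⟩ := by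
    intro w
    have := MR (w, 0) (0, 1)
    have hBw : (w : GaloisField p d) * (1:GaloisField p d)
        - (0:GaloisField p d) * (0:GaloisField p d) = w := by ring
    rw [hBform] at this
    simpa [hBw] using this
  have hc00 : c0 ≠ 0 := by
    intro hc
    apply hMtop
    rw [Submodule.eq_top_iff']
    intro w
    apply (hKM w).1
    rw [hMR2 w, hc, zero_mul]
    exact (hKN 0).2 (zero_mem N)
  -- conclusion
  refine ⟨σ, Units.mk0 c0 hc00, ?_⟩
  ext t
  simp only [Set.mem_image, SetLike.mem_coe, Units.val_mk0]
  constructor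
  · rintro ⟨x, hx, rfl⟩
    have hFx : F ⟨0,0,x⟩ = 1 := (hKM x).2 hx
    have : QuotientGroup.mk' Nbar ⟨0,0, c0 * σ x⟩ = 1 := by rw [← hMR2, hFx]
    have hmem := (hKN _).1 this
    rwa [mul_comm] at hmem
  · intro ht
    refine ⟨σ.symm (t * c0⁻¹), ?_, ?_⟩
    · have hval : c0 * σ (σ.symm (t * c0⁻¹)) = t := by
        rw [RingEquiv.apply_symm_apply]
        field_simp
      apply (hKM _).1
      rw [hMR2, hval]
      exact (hKN t).2 ht
    · rw [RingEquiv.apply_symm_apply]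
      field_simp

end Forward

/-- Let `p` be an odd prime, `2d+2 ≤ n ≤ 3d`, and suppose no integer `i` with
`n-2d ≤ i < d` divides `d`.  Let `H = H_1(𝔽_{p^d})`, identify `Z(H)` with `𝔽_{p^d}`, and let
`M`, `N` be `𝔽_p`-subspaces of `𝔽_{p^d}` of codimension `n-2d`.  Then `H/M ≅ H/N` if and only
if there are `σ ∈ Gal(𝔽_{p^d}/𝔽_p)` and `c ∈ 𝔽_{p^d}ˣ` with `σ(M)·c = N`. -/
theorem heisenberg_quotient_iso_iff_semilinear
    (p n d : ℕ) [Fact p.Prime] (hp : Odd p)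
    (h1 : 2 * d + 2 ≤ n) (h2 : n ≤ 3 * d)
    (h3 : ∀ i : ℕ, n - 2 * d ≤ i → i < d → ¬ i ∣ d)
    (M N : Submodule (ZMod p) (GaloisField p d))
    (hM : Module.finrank (ZMod p) M = d - (n - 2 * d))
    (hN : Module.finrank (ZMod p) N = d - (n - 2 * d))
    [(Heisenberg.centralSubgroup (GaloisField p d) 1 M.toAddSubgroup).Normal]
    [(Heisenberg.centralSubgroup (GaloisField p d) 1 N.toAddSubgroup).Normal] :
    Nonempty
        ((Heisenberg (GaloisField p d) 1 ⧸
            Heisenberg.centralSubgroup (GaloisField p d) 1 M.toAddSubgroup) ≃*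
          (Heisenberg (GaloisField p d) 1 ⧸
            Heisenberg.centralSubgroup (GaloisField p d) 1 N.toAddSubgroup)) ↔
      ∃ (σ : GaloisField p d ≃+* GaloisField p d) (c : (GaloisField p d)ˣ),
        (fun x => σ x * (c : GaloisField p d)) '' (M : Set (GaloisField p d)) =
          (N : Set (GaloisField p d)) := by
  constructor
  · rintro ⟨Φ⟩
    exact forward hp h1 h2 h3 M N hM hN Φ
  · rintro ⟨σ, c, h⟩
    have h' : (fun x => σ x * (c : GaloisField p d)) ''
        ((M.toAddSubgroup : AddSubgroup (GaloisField p d)) : Set (GaloisField p d)) =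
        ((N.toAddSubgroup : AddSubgroup (GaloisField p d)) : Set (GaloisField p d)) := by
      rw [Submodule.coe_toAddSubgroup, Submodule.coe_toAddSubgroup]
      exact h
    exact backward M.toAddSubgroup N.toAddSubgroup σ c h'
end

section
/- Let p be an odd prime, K a finite field of characteristic p, m ≥ 1, and let N be a proper subgroup of Z(H_m(K)). Then the quotient group G = H_m(K)/N is directly indecomposable: whenever G is isomorphic to a direct product A × B of groups, then A is trivial or B is trivial. -/
set_option linter.unusedSectionVars false

section Aux

variable {G A B : Type*} [Group G] [Group A] [Group B]

/-- If `A` is nonabelian and every noncentral `g` has all central elements as commutator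
values, then `B` has trivial center. -/
lemma aux_trivial_center (e : G ≃* A × B)
    (hkey : ∀ g ∉ Subgroup.center G, ∀ z ∈ Subgroup.center G, ∃ k, g * k * g⁻¹ * k⁻¹ = z)
    (hAnab : ∃ a a' : A, a * a' ≠ a' * a) :
    ∀ b : B, b ∈ Subgroup.center B → b = 1 := by
  obtain ⟨a, a', ha⟩ := hAnab
  intro b hb
  set g : G := e.symm (a, 1) with hg
  have hgnc : g ∉ Subgroup.center G := by
    intro hc
    rw [Subgroup.mem_center_iff] at hc
    have := hc (e.symm (a', 1))
    have := congrArg e this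
    simp only [hg, map_mul, MulEquiv.apply_symm_apply] at this
    exact ha (congrArg Prod.fst this).symm
  set z : G := e.symm (1, b) with hz
  have hzc : z ∈ Subgroup.center G := by
    rw [Subgroup.mem_center_iff]
    intro h
    have : e h * (1, b) = (1, b) * e h := by
      have hb' := Subgroup.mem_center_iff.mp hb (e h).2
      ext
      · simp
      · simpa using hb'
    calc h * z = e.symm (e h * (1, b)) := by simp [hz]
      _ = e.symm ((1, b) * e h) := by rw [this]
      _ = z * h := by simp [hz]
  obtain ⟨k, hk⟩ := hkey g hgnc z hzc
  have := congrArg e hk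
  simp only [map_mul, map_inv, hg, hz, MulEquiv.apply_symm_apply] at this
  have h2 := congrArg Prod.snd this
  simpa using h2.symm

/-- The image of a central element has central components. -/
lemma center_image_snd (e : G ≃* A × B) {z : G} (hz : z ∈ Subgroup.center G) :
    (e z).2 ∈ Subgroup.center B := by
  rw [Subgroup.mem_center_iff]
  intro y
  have := Subgroup.mem_center_iff.mp hz (e.symm (1, y))
  have := congrArg e this
  simp only [map_mul, MulEquiv.apply_symm_apply] at this
  simpa using congrArg Prod.snd this

end Aux

namespace Heisenberg

variable {K : Type*} [Field K] {m : ℕ}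

/-- Commutator formula. -/
lemma comm_formula (a b : Heisenberg K m) :
    a * b * (b * a)⁻¹ =
      ⟨0, 0, dotProduct a.x b.y - dotProduct b.x a.y⟩ := by
  ext <;> simp [add_dotProduct, dotProduct_add, neg_dotProduct,
    dotProduct_neg] <;> ring

lemma commutator_eq (a b : Heisenberg K m) :
    a * b * a⁻¹ * b⁻¹ =
      ⟨0, 0, dotProduct a.x b.y - dotProduct b.x a.y⟩ := by
  have := comm_formula a b
  rw [mul_inv_rev, ← mul_assoc] at this
  exact this

/-- Central elements are exactly those with vanishing vector parts. -/
lemma mem_center_iff {a : Heisenberg K m} :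
    a ∈ Subgroup.center (Heisenberg K m) ↔ a.x = 0 ∧ a.y = 0 := by
  rw [Subgroup.mem_center_iff]
  constructor
  · intro h
    constructor
    · funext i
      have := congrArg Heisenberg.z (h ⟨0, Pi.single i 1, 0⟩)
      simpa using this
    · funext i
      have := congrArg Heisenberg.z (h ⟨Pi.single i 1, 0, 0⟩)
      simpa using this.symm
  · rintro ⟨hx, hy⟩ g
    ext <;> simp [hx, hy, add_comm]

/-- Surjectivity of the commutator pairing: if `(u,v) ≠ 0` we can realize any value. -/
lemma pairing_surj {u v : Fin m → K} (h : ¬(u = 0 ∧ v = 0)) (t : K) :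
    ∃ b : Heisenberg K m, dotProduct u b.y - dotProduct b.x v = t := by
  by_cases hu : u = 0
  · have hv : v ≠ 0 := fun hv => h ⟨hu, hv⟩
    obtain ⟨j, hj⟩ := Function.ne_iff.mp hv
    have hj' : v j ≠ 0 := by simpa using hj
    refine ⟨⟨Pi.single j (-t * (v j)⁻¹), 0, 0⟩, ?_⟩
    simp only [hu, zero_dotProduct, single_dotProduct]
    field_simp
    ring
  · obtain ⟨i, hi⟩ := Function.ne_iff.mp hu
    have hi' : u i ≠ 0 := by simpa using hi
    refine ⟨⟨0, Pi.single i (t * (u i)⁻¹), 0⟩, ?_⟩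
    simp only [dotProduct_single, zero_dotProduct, sub_zero]
    field_simp

lemma central_mk (N : Subgroup (Heisenberg K m)) [N.Normal] {h : Heisenberg K m}
    (hc : h ∈ Subgroup.center (Heisenberg K m)) :
    (h : Heisenberg K m ⧸ N) ∈ Subgroup.center (Heisenberg K m ⧸ N) := by
  rw [Subgroup.mem_center_iff]
  intro q
  obtain ⟨r, rfl⟩ := QuotientGroup.mk_surjective q
  rw [← QuotientGroup.mk_mul, ← QuotientGroup.mk_mul,
    Subgroup.mem_center_iff.mp hc r]

/-- Key lemma: in the quotient, every central element is a commutator value of any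
noncentral element. -/
lemma key_lemma (N : Subgroup (Heisenberg K m)) [N.Normal]
    {s₀ : K} (hs₀ : (⟨0, 0, s₀⟩ : Heisenberg K m) ∉ N)
    (g : Heisenberg K m ⧸ N) (hg : g ∉ Subgroup.center (Heisenberg K m ⧸ N))
    (z : Heisenberg K m ⧸ N) (hz : z ∈ Subgroup.center (Heisenberg K m ⧸ N)) :
    ∃ k, g * k * g⁻¹ * k⁻¹ = z := by
  obtain ⟨h, rfl⟩ := QuotientGroup.mk_surjective g
  obtain ⟨c, rfl⟩ := QuotientGroup.mk_surjective z
  have hxy : ¬(h.x = 0 ∧ h.y = 0) := by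
    intro hh
    exact hg (central_mk N (mem_center_iff.mpr hh))
  have hcxy : c.x = 0 ∧ c.y = 0 := by
    by_contra hcc
    obtain ⟨k₀, hk₀⟩ := pairing_surj hcc s₀
    have hmem : c * k₀ * (k₀ * c)⁻¹ ∈ N := by
      rw [← QuotientGroup.eq_one_iff, QuotientGroup.mk_mul, QuotientGroup.mk_inv,
        QuotientGroup.mk_mul, QuotientGroup.mk_mul,
        Subgroup.mem_center_iff.mp hz ((k₀ : Heisenberg K m ⧸ N))]
      group
    rw [comm_formula, hk₀] at hmem
    exact hs₀ hmem
  obtain ⟨k, hk⟩ := pairing_surj hxy c.z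
  refine ⟨(k : Heisenberg K m ⧸ N), ?_⟩
  rw [← QuotientGroup.mk_inv, ← QuotientGroup.mk_inv, ← QuotientGroup.mk_mul,
    ← QuotientGroup.mk_mul, ← QuotientGroup.mk_mul, commutator_eq, hk]
  congr 1
  ext <;> simp [hcxy.1, hcxy.2]

end Heisenberg

/-- For an odd prime `p`, a finite field `K` of characteristic `p`, `m ≥ 1`,
and a proper subgroup `N` of the center of `H_m(K)`, the quotient `H_m(K)/N` is directly
indecomposable: if it is isomorphic to a direct product `A × B`, then `A` or `B` is trivial. -/
theorem heisenberg_quotient_directly_indecomposable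
    (p : ℕ) [Fact p.Prime] (hp : Odd p)
    (K : Type) [Field K] [Fintype K] [CharP K p] (m : ℕ) (hm : 1 ≤ m)
    (N : Subgroup (Heisenberg K m)) [N.Normal]
    (hN : N < Subgroup.center (Heisenberg K m))
    (A B : Type) [Group A] [Group B]
    (e : (Heisenberg K m ⧸ N) ≃* A × B) :
    Subsingleton A ∨ Subsingleton B := by
  classical
  by_contra hcon
  push_neg at hcon
  obtain ⟨hA, hB⟩ := hcon
  -- a central element outside N
  obtain ⟨c, hcZ, hcN⟩ := SetLike.exists_of_lt hN
  obtain ⟨hcx, hcy⟩ := Heisenberg.mem_center_iff.mp hcZ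
  set s₀ : K := c.z with hs₀def
  have hc' : c = (⟨0, 0, s₀⟩ : Heisenberg K m) := by ext <;> simp [hcx, hcy, hs₀def]
  have hs₀ : (⟨0, 0, s₀⟩ : Heisenberg K m) ∉ N := hc' ▸ hcN
  haveI : NeZero m := ⟨by omega⟩
  -- the quotient is nonabelian
  have hnonab : ∃ g₁ g₂ : Heisenberg K m ⧸ N, g₁ * g₂ ≠ g₂ * g₁ := by
    refine ⟨((⟨Pi.single 0 1, 0, 0⟩ : Heisenberg K m) : Heisenberg K m ⧸ N),
      ((⟨0, Pi.single 0 s₀, 0⟩ : Heisenberg K m) : Heisenberg K m ⧸ N), ?_⟩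
    intro hEq
    rw [← QuotientGroup.mk_mul, ← QuotientGroup.mk_mul, QuotientGroup.eq] at hEq
    have : (⟨Pi.single 0 1, 0, 0⟩ * ⟨0, Pi.single 0 s₀, 0⟩ :
        Heisenberg K m)⁻¹ * (⟨0, Pi.single 0 s₀, 0⟩ * ⟨Pi.single 0 1, 0, 0⟩) =
        (⟨0, 0, s₀⟩ : Heisenberg K m)⁻¹ := by
      ext <;> simp [add_dotProduct, dotProduct_add, neg_dotProduct,
        dotProduct_neg]
    rw [this] at hEq
    exact hs₀ (by simpa using N.inv_mem hEq)
  -- key lemma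
  have hkey := Heisenberg.key_lemma N hs₀
  -- nonabelianness of A × B, hence of A or B
  have hABnonab : (∃ a a' : A, a * a' ≠ a' * a) ∨ (∃ b b' : B, b * b' ≠ b' * b) := by
    by_contra hcc
    push_neg at hcc
    obtain ⟨g₁, g₂, hg⟩ := hnonab
    apply hg
    have : e (g₁ * g₂) = e (g₂ * g₁) := by
      rw [map_mul, map_mul]
      ext
      · exact hcc.1 (e g₁).1 (e g₂).1
      · exact hcc.2 (e g₁).2 (e g₂).2
    exact e.injective this
  -- the central element in the quotient
  set z₀ : Heisenberg K m ⧸ N := ((⟨0, 0, s₀⟩ : Heisenberg K m) : Heisenberg K m ⧸ N) with hz₀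
  have hz₀c : z₀ ∈ Subgroup.center (Heisenberg K m ⧸ N) :=
    Heisenberg.central_mk N (Heisenberg.mem_center_iff.mpr ⟨rfl, rfl⟩)
  have hz₀ne : z₀ ≠ 1 := by
    rw [hz₀, Ne, QuotientGroup.eq_one_iff]
    exact hs₀
  -- main case analysis
  rcases hABnonab with hAn | hBn
  · -- A nonabelian, so center of B is trivial
    have htrivB : ∀ b : B, b ∈ Subgroup.center B → b = 1 := aux_trivial_center e hkey hAn
    by_cases hBn : ∃ b b' : B, b * b' ≠ b' * b
    · -- B also nonabelian: center of A trivial too, contradicting z₀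
      have htrivA : ∀ a : A, a ∈ Subgroup.center A → a = 1 :=
        aux_trivial_center (e.trans (MulEquiv.prodComm : A × B ≃* B × A)) hkey hBn
      have h1 : (e z₀).1 = 1 :=
        htrivA _ (center_image_snd (e.trans (MulEquiv.prodComm : A × B ≃* B × A)) hz₀c)
      have h2 : (e z₀).2 = 1 := htrivB _ (center_image_snd e hz₀c)
      apply hz₀ne
      have : e z₀ = 1 := by ext <;> simp [h1, h2]
      simpa using congrArg e.symm this
    · -- B abelian: its center is everything, so B is trivial
      push_neg at hBn
      obtain ⟨b, hb⟩ := exists_ne (1 : B)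
      exact hb (htrivB b (Subgroup.mem_center_iff.mpr fun g => hBn g b))
  · -- B nonabelian, symmetric
    have htrivA : ∀ a : A, a ∈ Subgroup.center A → a = 1 :=
      aux_trivial_center (e.trans (MulEquiv.prodComm : A × B ≃* B × A)) hkey hBn
    by_cases hAn : ∃ a a' : A, a * a' ≠ a' * a
    · have htrivB : ∀ b : B, b ∈ Subgroup.center B → b = 1 := aux_trivial_center e hkey hAn
      have h1 : (e z₀).1 = 1 :=
        htrivA _ (center_image_snd (e.trans (MulEquiv.prodComm : A × B ≃* B × A)) hz₀c)
      have h2 : (e z₀).2 = 1 := htrivB _ (center_image_snd e hz₀c)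
      apply hz₀ne
      have : e z₀ = 1 := by ext <;> simp [h1, h2]
      simpa using congrArg e.symm this
    · push_neg at hAn
      obtain ⟨a, ha⟩ := exists_ne (1 : A)
      exact ha (htrivA a (Subgroup.mem_center_iff.mpr fun g => hAn g a))
end
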